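/- Let λ, μ, ν ∈ ℕⁿ be weakly decreasing with |ν| = |λ| + |μ|, let f ∈ B(λ,μ,ν)_ℤ, and let p be an s-t-turnpath of minimal length in R_f. Then p does not use both a turnvertex and its reverse turnvertex (the same turn traversed in the opposite direction). -/

import Mathlib

/-!
Framework for hive flows on the honeycomb graph, following
Bürgisser–Ikenmeyer, "A max-flow algorithm for positivity of
Littlewood-Richardson coefficients".

Vertices of the triangular graph `Δ` with parameter `n` are the points
`x(m,i)` with `0 ≤ i ≤ m ≤ n` (`m` = row counted from the top, `i` =
position in the row counted from the left).
-/

namespace LRFlows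

/-- Edges of the triangular graph `Δ`:
* `dl m i` is the down-left slanted edge from `x(m,i)` to `x(m+1,i)`,
* `dr m i` is the down-right slanted edge from `x(m,i)` to `x(m+1,i+1)`,
* `hz m i` is the horizontal edge from `x(m,i)` to `x(m,i+1)`. -/
inductive EdgeK : Type
  | dl (m i : ℕ)
  | dr (m i : ℕ)
  | hz (m i : ℕ)
  deriving DecidableEq

namespace EdgeK

def valid (n : ℕ) : EdgeK → Prop
  | dl m i => i ≤ m ∧ m + 1 ≤ n
  | dr m i => i ≤ m ∧ m + 1 ≤ n
  | hz m i => i + 1 ≤ m ∧ m ≤ n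

end EdgeK

/-- Hive triangles: `up m i` is the upright triangle with vertices
`x(m,i), x(m+1,i), x(m+1,i+1)`; `down m i` is the downright triangle with
vertices `x(m,i), x(m,i+1), x(m+1,i+1)`. -/
inductive Tri : Type
  | up (m i : ℕ)
  | down (m i : ℕ)
  deriving DecidableEq

namespace Tri

def valid (n : ℕ) : Tri → Prop
  | up m i => i ≤ m ∧ m + 1 ≤ n
  | down m i => i + 1 ≤ m ∧ m + 1 ≤ n

/-- The three sides of a hive triangle, listed in clockwise order. -/
def sides : Tri → List EdgeK
  | up m i => [.dr m i, .hz (m+1) i, .dl m i]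
  | down m i => [.hz m i, .dl m (i+1), .dr m i]

end Tri

/-- `e` is a side of the hive triangle `T`. -/
def sideOf (e : EdgeK) (T : Tri) : Prop := e ∈ T.sides

/-- The side following a given side of a hive triangle in clockwise order
around the triangle. -/
def cwNext : Tri → EdgeK → EdgeK
  | .up m i, e =>
      if e = .dr m i then .hz (m+1) i else if e = .hz (m+1) i then .dl m i else .dr m i
  | .down m i, e =>
      if e = .hz m i then .dl m (i+1) else if e = .dl m (i+1) then .dr m i else .hz m i

/-- The edges on the right border of `Δ`. -/
def onRight (n : ℕ) (e : EdgeK) : Prop := ∃ m, m + 1 ≤ n ∧ e = .dr m m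
/-- The edges on the bottom border of `Δ`. -/
def onBottom (n : ℕ) (e : EdgeK) : Prop := ∃ i, i + 1 ≤ n ∧ e = .hz n i
/-- The edges on the left border of `Δ`. -/
def onLeft (n : ℕ) (e : EdgeK) : Prop := ∃ m, m + 1 ≤ n ∧ e = .dl m 0

/-- The unique upright hive triangle having `e` as a side. -/
def upOf : EdgeK → Tri
  | .dl m i => .up m i
  | .dr m i => .up m i
  | .hz m i => .up (m - 1) i

/-- The downright hive triangle having `e` as a side, if any. -/
def dnOf? : EdgeK → Option Tri
  | .dl m i => if i = 0 then none else some (.down m (i - 1))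
  | .dr m i => some (.down m i)
  | .hz m i => some (.down m i)

/-- A flow class on the honeycomb graph `G`, recorded by its throughput
function `E(Δ) → ℝ`:  `thru k` is the net flow through the white vertex on
the edge `k` into the adjacent upright hive triangle. -/
structure Flow : Type where
  dl : ℕ → ℕ → ℝ
  dr : ℕ → ℕ → ℝ
  hz : ℕ → ℕ → ℝ

namespace Flow

def thru (f : Flow) : EdgeK → ℝ
  | .dl m i => f.dl m i
  | .dr m i => f.dr m i
  | .hz m i => f.hz m i

end Flow

noncomputable instance : Add Flow :=
  ⟨fun f g => ⟨fun m i => f.dl m i + g.dl m i, fun m i => f.dr m i + g.dr m i,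
    fun m i => f.hz m i + g.hz m i⟩⟩

noncomputable instance : SMul ℝ Flow :=
  ⟨fun c f => ⟨fun m i => c * f.dl m i, fun m i => c * f.dr m i, fun m i => c * f.hz m i⟩⟩

/-- A flow class is recorded by its values on the (valid) edges of `Δ` only;
we normalize all other values to `0`, so that flow classes correspond
bijectively to normalized `Flow`s. -/
def Normalized (n : ℕ) (f : Flow) : Prop :=
  (∀ m i, ¬ (EdgeK.dl m i).valid n → f.dl m i = 0) ∧
  (∀ m i, ¬ (EdgeK.dr m i).valid n → f.dr m i = 0) ∧
  (∀ m i, ¬ (EdgeK.hz m i).valid n → f.hz m i = 0)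

/-- Kirchhoff's conservation laws, in throughput form: the throughputs of the
three sides of every hive triangle (measured into the respective upright
triangle) sum to zero. -/
def IsFlow (n : ℕ) (f : Flow) : Prop :=
  (∀ m i, i ≤ m → m + 1 ≤ n → f.dl m i + f.dr m i + f.hz (m + 1) i = 0) ∧
  (∀ m i, i + 1 ≤ m → m + 1 ≤ n → f.hz m i + f.dl m (i + 1) + f.dr m i = 0)

/-- An integral flow class. -/
def IntegralFlow (f : Flow) : Prop :=
  ∀ m i, (∃ z : ℤ, f.dl m i = (z : ℝ)) ∧ (∃ z : ℤ, f.dr m i = (z : ℝ)) ∧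
    (∃ z : ℤ, f.hz m i = (z : ℝ))

/-- A `2^ℓ`-integral flow class. -/
def PowIntegral (l : ℕ) (f : Flow) : Prop :=
  ∀ m i, (∃ z : ℤ, f.dl m i = (z : ℝ) * 2 ^ l) ∧ (∃ z : ℤ, f.dr m i = (z : ℝ) * 2 ^ l) ∧
    (∃ z : ℤ, f.hz m i = (z : ℝ) * 2 ^ l)

/-- Rhombi (unions of an upright and a downright hive triangle sharing a side),
indexed by the direction of their diagonal:
* `hzD m i` has horizontal diagonal `hz (m+1) i`, triangles `up m i` and `down (m+1) i`;
* `dlD m i` has diagonal `dl m (i+1)`, triangles `up m (i+1)` and `down m i`;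
* `drD m i` has diagonal `dr m i`, triangles `up m i` and `down m i`. -/
inductive Rhombus : Type
  | hzD (m i : ℕ)
  | dlD (m i : ℕ)
  | drD (m i : ℕ)
  deriving DecidableEq

namespace Rhombus

def valid (n : ℕ) : Rhombus → Prop
  | hzD m i => i ≤ m ∧ m + 2 ≤ n
  | dlD m i => i + 1 ≤ m ∧ m + 1 ≤ n
  | drD m i => i + 1 ≤ m ∧ m + 1 ≤ n

/-- The diagonal of a rhombus (joining its two obtuse vertices). -/
def diag : Rhombus → EdgeK
  | hzD m i => .hz (m+1) i
  | dlD m i => .dl m (i+1)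
  | drD m i => .dr m i

/-- The upright hive triangle of a rhombus. -/
def triU : Rhombus → Tri
  | hzD m i => .up m i
  | dlD m i => .up m (i+1)
  | drD m i => .up m i

/-- The downright hive triangle of a rhombus. -/
def triD : Rhombus → Tri
  | hzD m i => .down (m+1) i
  | dlD m i => .down m i
  | drD m i => .down m i

end Rhombus

/-- The slack `σ(ρ,f)` of a rhombus `ρ` with respect to a flow class `f`:
the sum of the values of the corresponding hive function at the two obtuse
vertices minus the sum at the two acute vertices, expressed through the
throughputs of the two sides of `ρ` parallel to one fixed direction. -/
noncomputable def slack (f : Flow) : Rhombus → ℝ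
  | .hzD m i => f.dl (m+1) (i+1) - f.dl m i
  | .dlD m i => f.hz (m+1) (i+1) - f.hz m i
  | .drD m i => f.hz m i - f.hz (m+1) i

/-- A hive flow: a flow class all of whose rhombus slacks are nonnegative. -/
def IsHive (n : ℕ) (f : Flow) : Prop :=
  IsFlow n f ∧ ∀ ρ : Rhombus, ρ.valid n → 0 ≤ slack f ρ

/-- `∑_{i<n} lam i`, i.e. `|λ|` for `λ ∈ ℕⁿ`. -/
def psum (n : ℕ) (lam : ℕ → ℕ) : ℕ := ∑ i ∈ Finset.range n, lam i

/-- `λ, μ, ν ∈ ℕⁿ` are weakly decreasing with `|ν| = |λ| + |μ|`. -/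
def PartitionData (n : ℕ) (lam mu nu : ℕ → ℕ) : Prop :=
  (∀ i j, i ≤ j → j + 1 ≤ n → lam j ≤ lam i) ∧
  (∀ i j, i ≤ j → j + 1 ≤ n → mu j ≤ mu i) ∧
  (∀ i j, i ≤ j → j + 1 ≤ n → nu j ≤ nu i) ∧
  psum n nu = psum n lam + psum n mu

/-- Membership in the polytope `B(λ,μ,ν)` of bounded hive flows.
The `i`-th right border edge from the top is `dr (i-1) (i-1)` with capacity
`λ_i = lam (i-1)`; the `i`-th bottom border edge from the right is
`hz n (n-i)` with capacity `μ_i`; the `i`-th left border edge from the top is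
`dl (i-1) 0` with capacity `ν_i`. -/
def MemB (n : ℕ) (lam mu nu : ℕ → ℕ) (f : Flow) : Prop :=
  Normalized n f ∧ IsHive n f ∧
  (∀ m, m + 1 ≤ n → 0 ≤ f.dr m m ∧ f.dr m m ≤ (lam m : ℝ)) ∧
  (∀ i, i + 1 ≤ n → 0 ≤ f.hz n i ∧ f.hz n i ≤ (mu (n - 1 - i) : ℝ)) ∧
  (∀ m, m + 1 ≤ n → 0 ≤ -(f.dl m 0) ∧ -(f.dl m 0) ≤ (nu m : ℝ))

/-- Membership in the polytope `P(λ,μ,ν)` of capacity achieving hive flows. -/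
def MemP (n : ℕ) (lam mu nu : ℕ → ℕ) (f : Flow) : Prop :=
  Normalized n f ∧ IsHive n f ∧
  (∀ m, m + 1 ≤ n → f.dr m m = (lam m : ℝ)) ∧
  (∀ i, i + 1 ≤ n → f.hz n i = (mu (n - 1 - i) : ℝ)) ∧
  (∀ m, m + 1 ≤ n → -(f.dl m 0) = (nu m : ℝ))

/-- `B(λ,μ,ν)_ℤ`. -/
def MemBZ (n : ℕ) (lam mu nu : ℕ → ℕ) (f : Flow) : Prop :=
  MemB n lam mu nu f ∧ IntegralFlow f

/-- `P(λ,μ,ν)_ℤ`. -/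
def MemPZ (n : ℕ) (lam mu nu : ℕ → ℕ) (f : Flow) : Prop :=
  MemP n lam mu nu f ∧ IntegralFlow f

/-- The overall throughput `δ(f)`: the total throughput through the right and
bottom borders of `Δ`. -/
noncomputable def thr (n : ℕ) (f : Flow) : ℝ :=
  ∑ m ∈ Finset.range n, f.dr m m + ∑ i ∈ Finset.range n, f.hz n i

/-! ### The honeycomb graph `G` -/

/-- Vertices of the honeycomb graph `G`: white vertices on the edges of `Δ`,
black vertices in the hive triangles, a source and a target. -/
inductive GVertex : Type
  | white (e : EdgeK)
  | black (T : Tri)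
  | src
  | tgt
  deriving DecidableEq

/-- The adjacency of the directed honeycomb graph `G` (each undirected edge
appears as two opposite directed edges). -/
def GAdj (n : ℕ) (u v : GVertex) : Prop :=
  match u, v with
  | .white e, .black T => e.valid n ∧ T.valid n ∧ sideOf e T
  | .black T, .white e => e.valid n ∧ T.valid n ∧ sideOf e T
  | .src, .white e => e.valid n ∧ (onRight n e ∨ onBottom n e)
  | .white e, .src => e.valid n ∧ (onRight n e ∨ onBottom n e)
  | .tgt, .white e => e.valid n ∧ onLeft n e
  | .white e, .tgt => e.valid n ∧ onLeft n e
  | _, _ => False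

/-- The (cyclically) consecutive pairs of a list. -/
def cyclePairs (l : List GVertex) : List (GVertex × GVertex) := l.zip (l.rotate 1)

/-- A (directed) cycle in `G`, recorded as the list of its pairwise distinct
vertices. -/
def IsGCycle (n : ℕ) (l : List GVertex) : Prop :=
  l ≠ [] ∧ l.Nodup ∧ ∀ p ∈ cyclePairs l, GAdj n p.1 p.2

/-- A proper cycle uses neither the source nor the target. -/
def ProperCycle (l : List GVertex) : Prop :=
  GVertex.src ∉ l ∧ GVertex.tgt ∉ l

/-- The throughput function of the integral flow class defined by a cycle in `G`. -/
def cycleDelta (l : List GVertex) (e : EdgeK) : ℝ :=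
  (if (GVertex.white e, GVertex.black (upOf e)) ∈ cyclePairs l then (1 : ℝ) else 0) -
  (if (GVertex.black (upOf e), GVertex.white e) ∈ cyclePairs l then (1 : ℝ) else 0)

/-- The flow class `f + c` for a cycle `c` in `G`. -/
noncomputable def addCycle (f : Flow) (l : List GVertex) : Flow :=
  ⟨fun m i => f.dl m i + cycleDelta l (.dl m i),
   fun m i => f.dr m i + cycleDelta l (.dr m i),
   fun m i => f.hz m i + cycleDelta l (.hz m i)⟩

/-- `f` and `g` are neighbours: `g - f` is a proper cycle in `G`. -/
def NeighbourFlow (n : ℕ) (f g : Flow) : Prop :=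
  ∃ l : List GVertex, IsGCycle n l ∧ ProperCycle l ∧
    ∀ e : EdgeK, g.thru e - f.thru e = cycleDelta l e

/-- The support of (the reduced representative of) a flow class `d`, as a
relation on directed edges of `G`. -/
def suppEdge (n : ℕ) (d : Flow) (u v : GVertex) : Prop :=
  match u, v with
  | .white e, .black T =>
      e.valid n ∧ T.valid n ∧ ((T = upOf e ∧ 0 < d.thru e) ∨ (dnOf? e = some T ∧ d.thru e < 0))
  | .black T, .white e =>
      e.valid n ∧ T.valid n ∧ ((T = upOf e ∧ d.thru e < 0) ∨ (dnOf? e = some T ∧ 0 < d.thru e))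
  | .src, .white e => e.valid n ∧ (onRight n e ∨ onBottom n e) ∧ 0 < d.thru e
  | .white e, .src => e.valid n ∧ (onRight n e ∨ onBottom n e) ∧ d.thru e < 0
  | .tgt, .white e => e.valid n ∧ onLeft n e ∧ 0 < d.thru e
  | .white e, .tgt => e.valid n ∧ onLeft n e ∧ d.thru e < 0
  | _, _ => False

/-! ### Turns and slack contributions -/

/-- A turn: a path of length 2 in `G` inside `Δ`, entering a hive triangle
through the white vertex on side `inE` and leaving it through the white vertex
on side `outE`. -/
structure Turn : Type where
  tri : Tri
  inE : EdgeK
  outE : EdgeK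
  deriving DecidableEq

namespace Turn

def valid (n : ℕ) (t : Turn) : Prop :=
  t.tri.valid n ∧ sideOf t.inE t.tri ∧ sideOf t.outE t.tri ∧ t.inE ≠ t.outE

end Turn

/-- A turn is counterclockwise iff it goes to the clockwise-next side
(such a turn rotates counterclockwise around its pivot vertex). -/
def IsCCWTurn (t : Turn) : Prop := t.outE = cwNext t.tri t.inE

/-- A turn is clockwise iff it comes from the clockwise-next side of its exit. -/
def IsCWTurn (t : Turn) : Prop := t.inE = cwNext t.tri t.outE

/-- The side of the triangle of a turn not used by the turn. -/
def thirdSide (t : Turn) : EdgeK :=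
  if cwNext t.tri t.outE = t.inE then cwNext t.tri t.inE else cwNext t.tri t.outE

/-- A slack contribution of a rhombus: a single turn (at an acute angle) or a
concatenated pair of turns (around an obtuse angle). -/
inductive Contrib : Type
  | single (t : Turn)
  | double (t₁ t₂ : Turn)
  deriving DecidableEq

/-- The four negative slack contributions `Ψ₋(ρ)` of a rhombus: the two
counterclockwise turns at the acute angles, and the two clockwise length-4
paths around the obtuse angles. -/
def negContrib (ρ : Rhombus) : Fin 4 → Contrib :=
  ![Contrib.single ⟨ρ.triU, cwNext ρ.triU ρ.diag, cwNext ρ.triU (cwNext ρ.triU ρ.diag)⟩,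
    Contrib.single ⟨ρ.triD, cwNext ρ.triD ρ.diag, cwNext ρ.triD (cwNext ρ.triD ρ.diag)⟩,
    Contrib.double ⟨ρ.triU, cwNext ρ.triU ρ.diag, ρ.diag⟩
      ⟨ρ.triD, ρ.diag, cwNext ρ.triD (cwNext ρ.triD ρ.diag)⟩,
    Contrib.double ⟨ρ.triD, cwNext ρ.triD ρ.diag, ρ.diag⟩
      ⟨ρ.triU, ρ.diag, cwNext ρ.triU (cwNext ρ.triU ρ.diag)⟩]

/-- The four positive slack contributions `Ψ₊(ρ)` of a rhombus: the two
clockwise turns at the acute angles, and the two counterclockwise length-4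
paths around the obtuse angles. -/
def posContrib (ρ : Rhombus) : Fin 4 → Contrib :=
  ![Contrib.single ⟨ρ.triU, cwNext ρ.triU (cwNext ρ.triU ρ.diag), cwNext ρ.triU ρ.diag⟩,
    Contrib.single ⟨ρ.triD, cwNext ρ.triD (cwNext ρ.triD ρ.diag), cwNext ρ.triD ρ.diag⟩,
    Contrib.double ⟨ρ.triD, cwNext ρ.triD (cwNext ρ.triD ρ.diag), ρ.diag⟩
      ⟨ρ.triU, ρ.diag, cwNext ρ.triU ρ.diag⟩,
    Contrib.double ⟨ρ.triU, cwNext ρ.triU (cwNext ρ.triU ρ.diag), ρ.diag⟩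
      ⟨ρ.triD, ρ.diag, cwNext ρ.triD ρ.diag⟩]

/-- The antipodal contribution of the `j`-th negative slack contribution of a
rhombus: reverse it and rotate by 180°.  It is a positive contribution. -/
def antipodalContrib (ρ : Rhombus) : Fin 4 → Contrib :=
  ![posContrib ρ 1, posContrib ρ 0, posContrib ρ 3, posContrib ρ 2]

/-- The directed edges of `G` used by a turn. -/
def turnGEdges (t : Turn) : List (GVertex × GVertex) :=
  [(GVertex.white t.inE, GVertex.black t.tri), (GVertex.black t.tri, GVertex.white t.outE)]

/-- The directed edges of `G` used by a slack contribution. -/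
def Contrib.gedges : Contrib → List (GVertex × GVertex)
  | .single t => turnGEdges t
  | .double t₁ t₂ => turnGEdges t₁ ++ turnGEdges t₂

/-- The contribution `c` is contained in the support of the flow class `d`. -/
def ContribInSupp (n : ℕ) (d : Flow) (c : Contrib) : Prop :=
  ∀ p ∈ c.gedges, suppEdge n d p.1 p.2

/-- The contribution `c` is contained in (the edge set of) the cycle `l`. -/
def ContribInCycle (c : Contrib) (l : List GVertex) : Prop :=
  ∀ p ∈ c.gedges, p ∈ cyclePairs l

/-- A cycle is `f`-hive preserving iff it uses no negative slack contribution
of an `f`-flat rhombus. -/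
def CycleHivePreserving (n : ℕ) (f : Flow) (l : List GVertex) : Prop :=
  ∀ ρ : Rhombus, ρ.valid n → slack f ρ = 0 →
    ∀ j : Fin 4, ¬ ContribInCycle (negContrib ρ j) l

/-- A cycle is `f`-secure iff it is `f`-hive preserving and does not use both
counterclockwise turns at the acute angles of any nearly `f`-flat rhombus. -/
def CycleSecure (n : ℕ) (f : Flow) (l : List GVertex) : Prop :=
  CycleHivePreserving n f l ∧
  ∀ ρ : Rhombus, ρ.valid n → slack f ρ = 1 →
    ¬ (ContribInCycle (negContrib ρ 0) l ∧ ContribInCycle (negContrib ρ 1) l)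

/-! ### The digraph `R` and residual digraphs -/

/-- Vertices of the auxiliary digraph `R`: the turns, the source and the target. -/
inductive RVertex : Type
  | turn (t : Turn)
  | src
  | tgt
  deriving DecidableEq

/-- A turnedge: an ordered pair of turns whose concatenation is a path of
length 4 in `G`. -/
def TurnEdge (t₁ t₂ : Turn) : Prop :=
  t₁.outE = t₂.inE ∧ t₁.tri ≠ t₂.tri ∧ t₁.inE ≠ t₂.outE

/-- Adjacency of the digraph `R`. -/
def RAdj (n : ℕ) (u v : RVertex) : Prop :=
  match u, v with
  | .turn t₁, .turn t₂ => t₁.valid n ∧ t₂.valid n ∧ TurnEdge t₁ t₂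
  | .src, .turn t => t.valid n ∧ (onRight n t.inE ∨ onBottom n t.inE)
  | .turn t, .src => t.valid n ∧ (onRight n t.outE ∨ onBottom n t.outE)
  | .turn t, .tgt => t.valid n ∧ onLeft n t.outE
  | .tgt, .turn t => t.valid n ∧ onLeft n t.inE
  | _, _ => False

/-- A turnvertex deleted in `R_f`: a single-turn negative contribution of an
`f`-flat rhombus. -/
def DelTurn (n : ℕ) (f : Flow) (t : Turn) : Prop :=
  ∃ ρ : Rhombus, ρ.valid n ∧ slack f ρ = 0 ∧ ∃ j : Fin 4, negContrib ρ j = Contrib.single t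

/-- A turnedge deleted in `R_f`: a double negative contribution of an
`f`-flat rhombus. -/
def DelTurnEdge (n : ℕ) (f : Flow) (t₁ t₂ : Turn) : Prop :=
  ∃ ρ : Rhombus, ρ.valid n ∧ slack f ρ = 0 ∧ ∃ j : Fin 4, negContrib ρ j = Contrib.double t₁ t₂

/-- A right or bottom border edge saturated by `f`. -/
def SatRB (n : ℕ) (lam mu : ℕ → ℕ) (f : Flow) (e : EdgeK) : Prop :=
  (∃ m, m + 1 ≤ n ∧ e = EdgeK.dr m m ∧ f.dr m m = (lam m : ℝ)) ∨
  (∃ i, i + 1 ≤ n ∧ e = EdgeK.hz n i ∧ f.hz n i = (mu (n - 1 - i) : ℝ))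

/-- A left border edge saturated by `f`. -/
def SatL (n : ℕ) (nu : ℕ → ℕ) (f : Flow) (e : EdgeK) : Prop :=
  ∃ m, m + 1 ≤ n ∧ e = EdgeK.dl m 0 ∧ -(f.dl m 0) = (nu m : ℝ)

/-- Adjacency of the residual digraph `R_f`. -/
def ResidAdj (n : ℕ) (lam mu nu : ℕ → ℕ) (f : Flow) (u v : RVertex) : Prop :=
  match u, v with
  | .turn t₁, .turn t₂ =>
      RAdj n (.turn t₁) (.turn t₂) ∧ ¬ DelTurn n f t₁ ∧ ¬ DelTurn n f t₂ ∧
        ¬ DelTurnEdge n f t₁ t₂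
  | .src, .turn t => RAdj n .src (.turn t) ∧ ¬ DelTurn n f t ∧ ¬ SatRB n lam mu f t.inE
  | .turn t, .src => RAdj n (.turn t) .src ∧ ¬ DelTurn n f t ∧ ¬ SatRB n lam mu f t.outE
  | .turn t, .tgt => RAdj n (.turn t) .tgt ∧ ¬ DelTurn n f t ∧ ¬ SatL n nu f t.outE
  | .tgt, .turn t => RAdj n .tgt (.turn t) ∧ ¬ DelTurn n f t ∧ ¬ SatL n nu f t.inE
  | _, _ => False

/-- A right or bottom border edge at which an additional unit of `2^ℓ` flow
does not fit. -/
def SatRB2 (n : ℕ) (lam mu : ℕ → ℕ) (f : Flow) (l : ℕ) (e : EdgeK) : Prop :=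
  (∃ m, m + 1 ≤ n ∧ e = EdgeK.dr m m ∧ (lam m : ℝ) < f.dr m m + 2 ^ l) ∨
  (∃ i, i + 1 ≤ n ∧ e = EdgeK.hz n i ∧ (mu (n - 1 - i) : ℝ) < f.hz n i + 2 ^ l)

/-- A left border edge at which an additional unit of `2^ℓ` flow does not fit. -/
def SatL2 (n : ℕ) (nu : ℕ → ℕ) (f : Flow) (l : ℕ) (e : EdgeK) : Prop :=
  ∃ m, m + 1 ≤ n ∧ e = EdgeK.dl m 0 ∧ (nu m : ℝ) < -(f.dl m 0) + 2 ^ l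

/-- Adjacency of the residual digraph `R_f^(ℓ)`, obtained from `R_f` by
further deleting the turnedges crossing border edges without room for `2^ℓ`
additional flow. -/
def ResidAdjL (n : ℕ) (lam mu nu : ℕ → ℕ) (f : Flow) (l : ℕ) (u v : RVertex) : Prop :=
  match u, v with
  | .src, .turn t => ResidAdj n lam mu nu f .src (.turn t) ∧ ¬ SatRB2 n lam mu f l t.inE
  | .turn t, .src => ResidAdj n lam mu nu f (.turn t) .src ∧ ¬ SatRB2 n lam mu f l t.outE
  | .turn t, .tgt => ResidAdj n lam mu nu f (.turn t) .tgt ∧ ¬ SatL2 n nu f l t.outE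
  | .tgt, .turn t => ResidAdj n lam mu nu f .tgt (.turn t) ∧ ¬ SatL2 n nu f l t.inE
  | u, v => ResidAdj n lam mu nu f u v

/-- An `s`-`t`-turnpath for an adjacency relation `A` on `RVertex`. -/
def IsSTPath (A : RVertex → RVertex → Prop) (l : List RVertex) : Prop :=
  l.Nodup ∧ l.Chain' A ∧ l.head? = some RVertex.src ∧ l.getLast? = some RVertex.tgt

/-- A `t`-`s`-turnpath. -/
def IsTSPath (A : RVertex → RVertex → Prop) (l : List RVertex) : Prop :=
  l.Nodup ∧ l.Chain' A ∧ l.head? = some RVertex.tgt ∧ l.getLast? = some RVertex.src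

/-- A turncycle (which may pass through `s` or `t`). -/
def IsRCycle (A : RVertex → RVertex → Prop) (l : List RVertex) : Prop :=
  l ≠ [] ∧ l.Nodup ∧ l.Chain' A ∧
    ∀ a b, l.getLast? = some a → l.head? = some b → A a b

/-- A complete turnpath: an `s`-`t`-turnpath, a `t`-`s`-turnpath, or a
turncycle. -/
def IsCompleteTP (A : RVertex → RVertex → Prop) (l : List RVertex) : Prop :=
  IsSTPath A l ∨ IsTSPath A l ∨ IsRCycle A l

/-- The throughput function of `π(p)` for a complete turnpath `p`
(vertex-distinct, so in/outflow at a turnvertex equals occurrence):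
total flow into the two turnvertices pointing from the white vertex of the
edge into its upright triangle, minus the total flow out of the two
turnvertices pointing out of the triangle towards the edge. -/
def pathDelta (l : List RVertex) (e : EdgeK) : ℝ :=
  (if RVertex.turn ⟨upOf e, e, cwNext (upOf e) e⟩ ∈ l then (1 : ℝ) else 0) +
  (if RVertex.turn ⟨upOf e, e, cwNext (upOf e) (cwNext (upOf e) e)⟩ ∈ l then (1 : ℝ) else 0) -
  (if RVertex.turn ⟨upOf e, cwNext (upOf e) e, e⟩ ∈ l then (1 : ℝ) else 0) -
  (if RVertex.turn ⟨upOf e, cwNext (upOf e) (cwNext (upOf e) e), e⟩ ∈ l then (1 : ℝ) else 0)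

/-- The flow class `f + π(p)` for a turnpath `p`. -/
noncomputable def addPath (f : Flow) (l : List RVertex) : Flow :=
  ⟨fun m i => f.dl m i + pathDelta l (.dl m i),
   fun m i => f.dr m i + pathDelta l (.dr m i),
   fun m i => f.hz m i + pathDelta l (.hz m i)⟩

/-! ### Flatspaces, sides, entrance and exit edges -/

/-- Two hive triangles are `f`-adjacent if they form an `f`-flat rhombus. -/
def FlatAdjTri (n : ℕ) (f : Flow) (T T' : Tri) : Prop :=
  ∃ ρ : Rhombus, ρ.valid n ∧ slack f ρ = 0 ∧
    ((T = ρ.triU ∧ T' = ρ.triD) ∨ (T = ρ.triD ∧ T' = ρ.triU))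

/-- An `f`-flatspace: a connected component of the `f`-adjacency relation on
hive triangles. -/
def IsFlatspace (n : ℕ) (f : Flow) (L : Set Tri) : Prop :=
  ∃ T : Tri, T.valid n ∧ L = {T' | Relation.ReflTransGen (FlatAdjTri n f) T T'}

/-- A valid triangle belonging to `L`. -/
def inL (n : ℕ) (L : Set Tri) (T : Tri) : Prop := T.valid n ∧ T ∈ L

/-- The downright triangle adjacent to `e` exists and belongs to `L`. -/
def dnIn (n : ℕ) (L : Set Tri) (e : EdgeK) : Prop :=
  ∃ T, dnOf? e = some T ∧ inL n L T

/-- A border edge of a set `L` of hive triangles: exactly one of its adjacent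
hive triangles belongs to `L`. -/
def BorderEdge (n : ℕ) (L : Set Tri) (e : EdgeK) : Prop :=
  e.valid n ∧ ((inL n L (upOf e) ∧ ¬ dnIn n L e) ∨ (dnIn n L e ∧ ¬ inL n L (upOf e)))

/-- The collinear successor of an edge of `Δ` along its line. -/
def lineSucc : EdgeK → EdgeK
  | .dl m i => .dl (m+1) i
  | .dr m i => .dr (m+1) (i+1)
  | .hz m i => .hz m (i+1)

/-- A side of `L`: a maximal run of consecutive collinear border edges of `L`. -/
def IsSide (n : ℕ) (L : Set Tri) (s : List EdgeK) : Prop :=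
  s ≠ [] ∧ (∀ e ∈ s, BorderEdge n L e) ∧ s.Chain' (fun a b => b = lineSucc a) ∧
  (∀ e a, s.head? = some a → lineSucc e = a → ¬ BorderEdge n L e) ∧
  (∀ a, s.getLast? = some a → ¬ BorderEdge n L (lineSucc a))

/-- The list recording a side of `L` (in `lineSucc` order) runs clockwise
around `L` (i.e. with the interior of `L` on its right). -/
def sideCW (n : ℕ) (L : Set Tri) (s : List EdgeK) : Prop :=
  ∃ e, s.head? = some e ∧
    (match e with
     | EdgeK.dr _ _ => inL n L (upOf e)
     | _ => dnIn n L e)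

/-- `e` is the entrance edge of the side `s` of `L` (the first edge of the
side in clockwise order around `L`). -/
def entranceOf (n : ℕ) (L : Set Tri) (s : List EdgeK) (e : EdgeK) : Prop :=
  (sideCW n L s ∧ s.head? = some e) ∨ (¬ sideCW n L s ∧ s.getLast? = some e)

/-- `e` is the exit edge of the side `s` of `L` (the last edge of the side in
clockwise order around `L`). -/
def exitOf (n : ℕ) (L : Set Tri) (s : List EdgeK) (e : EdgeK) : Prop :=
  (sideCW n L s ∧ s.getLast? = some e) ∨ (¬ sideCW n L s ∧ s.head? = some e)

open Classical in
/-- The throughput `δ(L,e,d)` of a flow class `d` into `L` through a border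
edge `e` of `L`. -/
noncomputable def inflowEdge (n : ℕ) (L : Set Tri) (d : Flow) (e : EdgeK) : ℝ :=
  if inL n L (upOf e) then d.thru e else -(d.thru e)

/-- `in(L,e,d)`. -/
noncomputable def inPosEdge (n : ℕ) (L : Set Tri) (d : Flow) (e : EdgeK) : ℝ :=
  max (inflowEdge n L d e) 0

/-- `out(L,e,d)`. -/
noncomputable def outPosEdge (n : ℕ) (L : Set Tri) (d : Flow) (e : EdgeK) : ℝ :=
  max (-(inflowEdge n L d e)) 0

/-- `in(L,a,d)`: the `L`-inflow of `d` through the side `a` (given as the list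
of its edges). -/
noncomputable def inSide (n : ℕ) (L : Set Tri) (d : Flow) (s : List EdgeK) : ℝ :=
  (s.map (inPosEdge n L d)).sum

/-- `out(L,a,d)`. -/
noncomputable def outSide (n : ℕ) (L : Set Tri) (d : Flow) (s : List EdgeK) : ℝ :=
  (s.map (outPosEdge n L d)).sum

/-- `v = (m,i)` is a vertex of the hive triangle `T`. -/
def vertexInTri (v : ℕ × ℕ) (T : Tri) : Prop :=
  match T with
  | .up m i => v = (m, i) ∨ v = (m+1, i) ∨ v = (m+1, i+1)
  | .down m i => v = (m, i) ∨ v = (m, i+1) ∨ v = (m+1, i+1)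

/-- The six hive triangles around an interior vertex `x(m,i)`. -/
def sixAround (m i : ℕ) : List Tri :=
  [.up m i, .down m i, .up (m-1) i, .down (m-1) (i-1), .up (m-1) (i-1), .down m (i-1)]

/-- The vertex `x(m,i)` is interior and all six hive triangles around it
belong to `L`. -/
def SurroundedVertex (n : ℕ) (L : Set Tri) (m i : ℕ) : Prop :=
  1 ≤ i ∧ i + 1 ≤ m ∧ m + 1 ≤ n ∧ ∀ T ∈ sixAround m i, T ∈ L

/-- An inner triangle of `L`: all of its vertices are surrounded by triangles
of `L`.  Triangles of `L` that are not inner are the border triangles. -/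
def InnerTri (n : ℕ) (L : Set Tri) (T : Tri) : Prop :=
  ∀ m i, vertexInTri (m, i) T → SurroundedVertex n L m i

/-- The hive triangle adjacent to `thirdSide t` on the other side of the
triangle of `t` belongs to `L`.  (For a counterclockwise turn this is the
rhombus through whose acute angle the turn passes.) -/
def acrossInL (n : ℕ) (L : Set Tri) (t : Turn) : Prop :=
  (upOf (thirdSide t) ≠ t.tri ∧ inL n L (upOf (thirdSide t))) ∨
  (∃ T', dnOf? (thirdSide t) = some T' ∧ T' ≠ t.tri ∧ inL n L T')

/-! ### Weighted families of complete turnpaths -/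

/-- A weighted family of complete turnpaths for the adjacency `A`: a
nonnegative weight on lists of `R`-vertices supported on complete turnpaths. -/
def WeightedFamily (A : RVertex → RVertex → Prop) (φ : List RVertex → ℝ) : Prop :=
  (∀ l, 0 ≤ φ l) ∧ ∀ l, ¬ IsCompleteTP A l → φ l = 0

/-- The turnpath `l` enters `L` by crossing the entrance edge of the side `s`. -/
def EntersVia (n : ℕ) (L : Set Tri) (s : List EdgeK) (l : List RVertex) : Prop :=
  ∃ e, entranceOf n L s e ∧ ∃ t : Turn, RVertex.turn t ∈ l ∧ t.inE = e ∧ inL n L t.tri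

/-- The turnpath `l` exits `L` by crossing the exit edge of the side `s`. -/
def ExitsVia (n : ℕ) (L : Set Tri) (s : List EdgeK) (l : List RVertex) : Prop :=
  ∃ e, exitOf n L s e ∧ ∃ t : Turn, RVertex.turn t ∈ l ∧ t.outE = e ∧ inL n L t.tri

/-- The entrance weight `in(L,a,φ)`. -/
noncomputable def inWeight (n : ℕ) (L : Set Tri) (s : List EdgeK)
    (φ : List RVertex → ℝ) : ℝ :=
  ∑ᶠ l ∈ {l : List RVertex | EntersVia n L s l}, φ l

/-- The exit weight `out(L,a,φ)`. -/
noncomputable def outWeight (n : ℕ) (L : Set Tri) (s : List EdgeK)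
    (φ : List RVertex → ℝ) : ℝ :=
  ∑ᶠ l ∈ {l : List RVertex | ExitsVia n L s l}, φ l

/-- A flow class `d` is `f`-hive preserving if `f + ε d ∈ B(λ,μ,ν)` for all
sufficiently small `ε > 0`. -/
def HivePreserving (n : ℕ) (lam mu nu : ℕ → ℕ) (f d : Flow) : Prop :=
  ∃ ε₀ : ℝ, 0 < ε₀ ∧ ∀ ε : ℝ, 0 < ε → ε ≤ ε₀ → MemB n lam mu nu (f + ε • d)

/-- The throughput of `π(d')` through the edge `e`, for the nonnegative flow
`d' = ∑_p φ(p)·p` on `R_f` determined by a weighted family `φ`. -/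
noncomputable def wDelta (φ : List RVertex → ℝ) (e : EdgeK) : ℝ :=
  ∑ᶠ l : List RVertex, φ l * pathDelta l e

/-- The overall throughput `δ(π(d'))` of the flow `d' = ∑_p φ(p)·p` on `R_f`. -/
noncomputable def piThr (n : ℕ) (φ : List RVertex → ℝ) : ℝ :=
  ∑ m ∈ Finset.range n, wDelta φ (.dr m m) + ∑ i ∈ Finset.range n, wDelta φ (.hz n i)

/-! ### Distance between flow classes -/

/-- The `L₁`-distance between two flow classes: the sum over the edges of `Δ`
of the absolute differences of the throughputs. -/
noncomputable def distFlow (n : ℕ) (f g : Flow) : ℝ :=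
  ∑ m ∈ Finset.range (n+1), ∑ i ∈ Finset.range (n+1),
    ((if i ≤ m ∧ m + 1 ≤ n then |g.dl m i - f.dl m i| else 0) +
     (if i ≤ m ∧ m + 1 ≤ n then |g.dr m i - f.dr m i| else 0) +
     (if i + 1 ≤ m ∧ m ≤ n then |g.hz m i - f.hz m i| else 0))

/-! ### Hives as functions on the vertices of `Δ` -/

/-- A hive on `Δ`: a function on the vertices `x(m,i)` (`i ≤ m ≤ n`) with
`h(x₀) = 0` at the top vertex, such that for every rhombus the sum of the
values at the two obtuse vertices is at least the sum at the two acute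
vertices. -/
def IsHiveFn (n : ℕ) (h : ℕ → ℕ → ℝ) : Prop :=
  h 0 0 = 0 ∧
  (∀ m i, i ≤ m → m + 2 ≤ n → h m i + h (m+2) (i+1) ≤ h (m+1) i + h (m+1) (i+1)) ∧
  (∀ m i, i + 1 ≤ m → m + 1 ≤ n → h m i + h (m+1) (i+2) ≤ h m (i+1) + h (m+1) (i+1)) ∧
  (∀ m i, i + 1 ≤ m → m + 1 ≤ n → h (m+1) i + h m (i+1) ≤ h m i + h (m+1) (i+1))

/-- A vertex of `Δ` lying on the boundary of the big triangle. -/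
def BdryVtx (n : ℕ) (m i : ℕ) : Prop :=
  i ≤ m ∧ m ≤ n ∧ (i = 0 ∨ i = m ∨ m = n)

/-! ### Convex sets and canonical turnpaths -/

/-- Planar coordinates of the vertex `x(m,i)` (up to an affine change of
coordinates, which does not affect convexity). -/
def vtxPoint (m i : ℕ) : ℝ × ℝ := (2 * (i : ℝ) - (m : ℝ), -(m : ℝ))

/-- The closed triangle in the plane corresponding to a hive triangle. -/
def triHull (T : Tri) : Set (ℝ × ℝ) :=
  match T with
  | .up m i => convexHull ℝ {vtxPoint m i, vtxPoint (m+1) i, vtxPoint (m+1) (i+1)}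
  | .down m i => convexHull ℝ {vtxPoint m i, vtxPoint m (i+1), vtxPoint (m+1) (i+1)}

/-- A convex set in the triangular graph `Δ`: a nonempty union of (valid) hive
triangles that is convex as a subset of the plane. -/
def IsConvexSet (n : ℕ) (L : Set Tri) : Prop :=
  L.Nonempty ∧ (∀ T ∈ L, T.valid n) ∧ Convex ℝ (⋃ T ∈ L, triHull T)

/-- The edge `e` belongs to (a triangle of) `L`. -/
def edgeInL (L : Set Tri) (e : EdgeK) : Prop := ∃ T ∈ L, sideOf e T

/-- A hive flow on the convex set `L`: a flow class on the subgraph `G_L`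
(conservation holds at the black vertices of all triangles of `L`; values on
edges outside `L` vanish) whose slack is nonnegative on every rhombus
contained in `L`. -/
def HiveFlowOn (n : ℕ) (L : Set Tri) (d : Flow) : Prop :=
  (∀ m i, Tri.up m i ∈ L → d.dl m i + d.dr m i + d.hz (m+1) i = 0) ∧
  (∀ m i, Tri.down m i ∈ L → d.hz m i + d.dl m (i+1) + d.dr m i = 0) ∧
  (∀ ρ : Rhombus, ρ.valid n → ρ.triU ∈ L → ρ.triD ∈ L → 0 ≤ slack d ρ) ∧
  (∀ e : EdgeK, ¬ edgeInL L e → d.thru e = 0)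

/-- The two endpoints of an edge of `Δ`. -/
def edgeEnds : EdgeK → (ℕ × ℕ) × (ℕ × ℕ)
  | .dl m i => ((m, i), (m+1, i))
  | .dr m i => ((m, i), (m+1, i+1))
  | .hz m i => ((m, i), (m, i+1))

/-- `v` is an obtuse (120°) corner of `L`: exactly two triangles of `L`
contain `v`. -/
def ObtuseCornerAt (n : ℕ) (L : Set Tri) (v : ℕ × ℕ) : Prop :=
  ∃ T₁ T₂ : Tri, T₁ ≠ T₂ ∧ inL n L T₁ ∧ inL n L T₂ ∧
    vertexInTri v T₁ ∧ vertexInTri v T₂ ∧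
    ∀ T, inL n L T → vertexInTri v T → T = T₁ ∨ T = T₂

/-- Some endpoint of `e` is an obtuse corner of `L`. -/
def EndsAtObtuse (n : ℕ) (L : Set Tri) (e : EdgeK) : Prop :=
  ObtuseCornerAt n L (edgeEnds e).1 ∨ ObtuseCornerAt n L (edgeEnds e).2

/-- A canonical turnpath of the convex set `L` (recorded by its list of
turns): either a single clockwise turn at an acute corner of `L`, or a
turnpath through the border triangles of `L`, starting at the entrance edge of
a side and ending at the exit edge of a side, traversing the border of `L`
counterclockwise (every counterclockwise turn closes off a rhombus leaving
`L`), never using two consecutive clockwise turns, and using two consecutive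
counterclockwise turns only to go around an obtuse corner of `L`. -/
def CanonicalTP (n : ℕ) (L : Set Tri) (p : List Turn) : Prop :=
  (∃ t, p = [t] ∧ t.valid n ∧ t.tri ∈ L ∧ IsCWTurn t ∧
    BorderEdge n L t.inE ∧ BorderEdge n L t.outE) ∨
  (2 ≤ p.length ∧
    (∀ t ∈ p, t.valid n ∧ inL n L t.tri ∧ ¬ InnerTri n L t.tri) ∧
    p.Chain' (fun t t' => TurnEdge t t' ∧ ¬ BorderEdge n L t.outE ∧
      ¬ (IsCWTurn t ∧ IsCWTurn t') ∧
      (IsCCWTurn t ∧ IsCCWTurn t' → EndsAtObtuse n L t.outE)) ∧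
    (∀ t ∈ p, IsCCWTurn t → ¬ acrossInL n L t) ∧
    (∀ t, p.head? = some t → ∃ s, IsSide n L s ∧ entranceOf n L s t.inE) ∧
    (∀ t, p.getLast? = some t → ∃ s, IsSide n L s ∧ exitOf n L s t.outE))

/-- A multiset of canonical turnpaths of `L`. -/
def MultisetCanonical (n : ℕ) (L : Set Tri) (φ : List Turn → ℕ) : Prop :=
  ∀ p, φ p ≠ 0 → CanonicalTP n L p

/-- `in(L,a,φ)`: the number, counted with multiplicity, of canonical
turnpaths of `φ` starting at the entrance edge of the side `a = s`. -/
noncomputable def inMs (n : ℕ) (L : Set Tri) (s : List EdgeK) (φ : List Turn → ℕ) : ℝ :=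
  ∑ᶠ p ∈ {p : List Turn | ∃ t, p.head? = some t ∧ entranceOf n L s t.inE}, (φ p : ℝ)

/-- `out(L,a,φ)`: the number, counted with multiplicity, of canonical
turnpaths of `φ` ending at the exit edge of the side `a = s`. -/
noncomputable def outMs (n : ℕ) (L : Set Tri) (s : List EdgeK) (φ : List Turn → ℕ) : ℝ :=
  ∑ᶠ p ∈ {p : List Turn | ∃ t, p.getLast? = some t ∧ exitOf n L s t.outE}, (φ p : ℝ)

end LRFlows

namespace LRFlows

/-! ### Auxiliary combinatorial lemmas for the proof below -/

private lemma turn_ext {t : Turn} {a : Tri} {b c : EdgeK} (h1 : t.tri = a)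
    (h2 : t.inE = b) (h3 : t.outE = c) : t = ⟨a, b, c⟩ := by
  cases t; subst h1 h2 h3; rfl

private lemma sideOf_cwNext {T : Tri} {e : EdgeK} (h : sideOf e T) :
    sideOf (cwNext T e) T := by
  cases T <;> simp [sideOf, Tri.sides] at h ⊢ <;>
    rcases h with rfl | rfl | rfl <;> simp [cwNext]

private lemma cwNext_ne {T : Tri} {e : EdgeK} (h : sideOf e T) : cwNext T e ≠ e := by
  cases T <;> simp [sideOf, Tri.sides] at h <;>
    rcases h with rfl | rfl | rfl <;> simp [cwNext]

private lemma cwNext2_ne {T : Tri} {e : EdgeK} (h : sideOf e T) :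
    cwNext T (cwNext T e) ≠ e := by
  cases T <;> simp [sideOf, Tri.sides] at h <;>
    rcases h with rfl | rfl | rfl <;> simp [cwNext]

private lemma cwNext2_ne' {T : Tri} {e : EdgeK} (h : sideOf e T) :
    cwNext T (cwNext T e) ≠ cwNext T e := by
  cases T <;> simp [sideOf, Tri.sides] at h <;>
    rcases h with rfl | rfl | rfl <;> simp [cwNext]

private lemma side_trichotomy {T : Tri} {e e' : EdgeK} (h : sideOf e T) (h' : sideOf e' T) :
    e' = e ∨ e' = cwNext T e ∨ e' = cwNext T (cwNext T e) := by
  cases T <;> simp [sideOf, Tri.sides] at h h' <;>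
    rcases h with rfl | rfl | rfl <;> rcases h' with rfl | rfl | rfl <;> simp [cwNext]

private lemma eq_upOf_or_dnOf {T : Tri} {e : EdgeK} (h : sideOf e T) :
    T = upOf e ∨ dnOf? e = some T := by
  cases T with
  | up m i =>
    simp [sideOf, Tri.sides] at h
    rcases h with rfl | rfl | rfl
    · left; rfl
    · left; simp [upOf]
    · left; rfl
  | down m i =>
    simp [sideOf, Tri.sides] at h
    rcases h with rfl | rfl | rfl
    · right; rfl
    · right; simp [dnOf?]
    · right; rfl

private lemma shared_side_eq {e a : EdgeK} {D : Tri} (hup : sideOf e (upOf e))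
    (hD : dnOf? e = some D) (h1 : sideOf a (upOf e)) (h2 : sideOf a D) : a = e := by
  cases e with
  | dl m i =>
    by_cases hi : i = 0
    · subst hi; simp [dnOf?] at hD
    · simp only [dnOf?, hi, ite_false, Option.some.injEq] at hD
      subst hD
      simp [upOf, sideOf, Tri.sides] at h1 h2
      rcases h1 with rfl | rfl | rfl <;> rcases h2 with h | h | h <;>
        first
          | rfl
          | exact EdgeK.noConfusion h
          | (injection h with h1 h2; omega)
  | dr m i =>
    simp only [dnOf?, Option.some.injEq] at hD
    subst hD
    simp [upOf, sideOf, Tri.sides] at h1 h2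
    rcases h1 with rfl | rfl | rfl <;> rcases h2 with h | h | h <;>
      first
        | rfl
        | exact EdgeK.noConfusion h
        | (injection h with h1 h2; omega)
  | hz m i =>
    simp only [dnOf?, Option.some.injEq] at hD
    subst hD
    simp [upOf, sideOf, Tri.sides] at hup h1 h2
    have hm : m = m - 1 + 1 := hup
    rcases h1 with rfl | rfl | rfl <;> rcases h2 with h | h | h <;>
      first
        | rfl
        | exact h
        | exact EdgeK.noConfusion h
        | (injection h with h1 h2; omega)

private lemma eq_of_two_shared {T T' : Tri} {a b : EdgeK} (hne : T ≠ T')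
    (haT : sideOf a T) (haT' : sideOf a T') (hbT : sideOf b T) (hbT' : sideOf b T') :
    a = b := by
  rcases eq_upOf_or_dnOf haT with h1 | h1 <;> rcases eq_upOf_or_dnOf haT' with h2 | h2
  · exact absurd (h1.trans h2.symm) hne
  · subst h1
    exact (shared_side_eq haT h2 hbT hbT').symm
  · subst h2
    exact (shared_side_eq haT' h1 hbT' hbT).symm
  · rw [h1] at h2
    exact absurd (Option.some_injective _ h2) hne

private lemma rhombus_up (ρ : Rhombus) : upOf ρ.diag = ρ.triU := by
  cases ρ <;> simp [Rhombus.diag, Rhombus.triU, upOf]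

private lemma rhombus_dn (ρ : Rhombus) : dnOf? ρ.diag = some ρ.triD := by
  cases ρ <;> simp [Rhombus.diag, Rhombus.triD, dnOf?]

private lemma rhombus_side_up (ρ : Rhombus) : sideOf ρ.diag ρ.triU := by
  cases ρ <;> simp [Rhombus.diag, Rhombus.triU, sideOf, Tri.sides]

private lemma rhombus_side_dn (ρ : Rhombus) : sideOf ρ.diag ρ.triD := by
  cases ρ <;> simp [Rhombus.diag, Rhombus.triD, sideOf, Tri.sides]

private lemma rhombus_triU_ne_triD (ρ : Rhombus) : ρ.triU ≠ ρ.triD := by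
  cases ρ <;> simp [Rhombus.triU, Rhombus.triD]
private lemma negContrib_0 (ρ : Rhombus) : negContrib ρ 0 =
    Contrib.single ⟨ρ.triU, cwNext ρ.triU ρ.diag, cwNext ρ.triU (cwNext ρ.triU ρ.diag)⟩ := rfl

private lemma negContrib_1 (ρ : Rhombus) : negContrib ρ 1 =
    Contrib.single ⟨ρ.triD, cwNext ρ.triD ρ.diag, cwNext ρ.triD (cwNext ρ.triD ρ.diag)⟩ := rfl

private lemma negContrib_2 (ρ : Rhombus) : negContrib ρ 2 =
    Contrib.double ⟨ρ.triU, cwNext ρ.triU ρ.diag, ρ.diag⟩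
      ⟨ρ.triD, ρ.diag, cwNext ρ.triD (cwNext ρ.triD ρ.diag)⟩ := rfl

private lemma negContrib_3 (ρ : Rhombus) : negContrib ρ 3 =
    Contrib.double ⟨ρ.triD, cwNext ρ.triD ρ.diag, ρ.diag⟩
      ⟨ρ.triU, ρ.diag, cwNext ρ.triU (cwNext ρ.triU ρ.diag)⟩ := rfl

private lemma getLast?_take' {α : Type*} {l : List α} {n : ℕ} (h : n < l.length) :
    (l.take (n+1)).getLast? = some l[n] := by
  rw [List.take_succ, List.getElem?_eq_getElem h, Option.toList_some, List.getLast?_concat]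

private lemma getLast?_drop' {α : Type*} {l : List α} {n : ℕ} (h : n < l.length) :
    (l.drop n).getLast? = l.getLast? := by
  conv_rhs => rw [← List.take_append_drop n l]
  rw [List.getLast?_append, Option.or_of_isSome]
  rw [List.getLast?_isSome]
  exact List.ne_nil_of_length_pos (by simp [List.length_drop]; omega)

/-- Splicing a shortcut into an `s`-`t`-turnpath. -/
private lemma splice (A : RVertex → RVertex → Prop) (p : List RVertex)
    (hp : IsSTPath A p) (x y : ℕ) (hx : x < p.length) (hy : y < p.length) (hxy : x < y)
    (mid : List RVertex) (hmidnd : mid.Nodup) (hfresh : ∀ v ∈ mid, v ∉ p)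
    (hchain : List.Chain' A (p[x] :: (mid ++ [p[y]]))) :
    ∃ q : List RVertex, IsSTPath A q ∧ q.length + y = p.length + x + 1 + mid.length := by
  obtain ⟨hnd, hch, hhd, hlast⟩ := hp
  have hdrophead : (p.drop y).head? = some p[y] := by
    rw [List.head?_drop, List.getElem?_eq_getElem hy]
  refine ⟨p.take (x+1) ++ (mid ++ p.drop y), ⟨?_, ?_, ?_, ?_⟩, ?_⟩
  · -- Nodup
    rw [List.nodup_append, List.nodup_append]
    refine ⟨hnd.sublist (List.take_sublist _ _), ⟨hmidnd, hnd.sublist (List.drop_sublist _ _),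
      fun v hv w hw hvw => by subst hvw; exact hfresh v hv ((List.drop_sublist _ _).mem hw)⟩, ?_⟩
    intro v hv w hv' hvw; subst hvw
    rcases List.mem_append.1 hv' with h | h
    · exact hfresh v h ((List.take_sublist _ _).mem hv)
    · exact List.disjoint_take_drop hnd (by omega) hv h
  · -- Chain'
    change List.IsChain _ _ at hchain
    rw [List.isChain_cons] at hchain
    obtain ⟨hjunc, hchain⟩ := hchain
    rw [List.isChain_append] at hchain
    obtain ⟨hmidch, -, hjunc2⟩ := hchain
    change List.IsChain _ _
    rw [List.isChain_append, List.isChain_append]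
    refine ⟨hch.take _, ⟨hmidch, hch.drop _, ?_⟩, ?_⟩
    · -- mid → drop
      intro a ha b hb
      rw [hdrophead, Option.mem_some_iff] at hb
      subst hb
      exact hjunc2 a ha _ (by simp)
    · -- take → (mid ++ drop)
      intro a ha b hb
      rw [getLast?_take' hx, Option.mem_some_iff] at ha
      subst ha
      apply hjunc
      rw [List.head?_append] at hb ⊢
      rw [hdrophead] at hb
      simpa using hb
  · -- head?
    rw [List.head?_eq_getElem?] at hhd ⊢
    rw [List.getElem?_append_left (by simp [List.length_take]; omega), List.getElem?_take]
    simpa using hhd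
  · -- getLast?
    rw [List.getLast?_append, List.getLast?_append, getLast?_drop' hy, hlast]
    rfl
  · simp [List.length_take, List.length_drop]; omega
private lemma negContrib_cases (ρ : Rhombus) (j : Fin 4) (c : Contrib)
    (h : negContrib ρ j = c) :
    c = Contrib.single ⟨ρ.triU, cwNext ρ.triU ρ.diag, cwNext ρ.triU (cwNext ρ.triU ρ.diag)⟩ ∨
    c = Contrib.single ⟨ρ.triD, cwNext ρ.triD ρ.diag, cwNext ρ.triD (cwNext ρ.triD ρ.diag)⟩ ∨
    c = Contrib.double ⟨ρ.triU, cwNext ρ.triU ρ.diag, ρ.diag⟩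
      ⟨ρ.triD, ρ.diag, cwNext ρ.triD (cwNext ρ.triD ρ.diag)⟩ ∨
    c = Contrib.double ⟨ρ.triD, cwNext ρ.triD ρ.diag, ρ.diag⟩
      ⟨ρ.triU, ρ.diag, cwNext ρ.triU (cwNext ρ.triU ρ.diag)⟩ := by
  fin_cases j
  · exact Or.inl h.symm
  · exact Or.inr (Or.inl h.symm)
  · exact Or.inr (Or.inr (Or.inl h.symm))
  · exact Or.inr (Or.inr (Or.inr h.symm))
private lemma eq_cw_of_ne {T : Tri} {d a g : EdgeK} (sd : sideOf d T) (sa : sideOf a T)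
    (had : a ≠ d) (hag : a ≠ g) (hg : g = cwNext T (cwNext T d)) : a = cwNext T d := by
  rcases side_trichotomy sd sa with h | h | h
  · exact absurd h had
  · exact h
  · exact absurd (h.trans hg.symm) hag

private lemma eq_cw2_of_ne {T : Tri} {d a g : EdgeK} (sd : sideOf d T) (sa : sideOf a T)
    (had : a ≠ d) (hag : a ≠ g) (hg : g = cwNext T d) : a = cwNext T (cwNext T d) := by
  rcases side_trichotomy sd sa with h | h | h
  · exact absurd h had
  · exact absurd (h.trans hg.symm) hag
  · exact h

private lemma third_side_eq {T : Tri} {d a g x : EdgeK}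
    (sd : sideOf d T) (sa : sideOf a T) (sg : sideOf g T) (sx : sideOf x T)
    (had : a ≠ d) (hgd : g ≠ d) (hga : g ≠ a) (hxd : x ≠ d) (hxg : x ≠ g) : x = a := by
  rcases side_trichotomy sd sa with ha | ha | ha <;>
    rcases side_trichotomy sd sg with hg' | hg' | hg' <;>
      rcases side_trichotomy sd sx with hx | hx | hx <;>
        first
          | exact absurd ha had
          | exact absurd hg' hgd
          | exact absurd hx hxd
          | exact absurd (hg'.trans ha.symm) hga
          | exact absurd (hx.trans hg'.symm) hxg
          | exact hx.trans ha.symm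
/-- A shortest `s`-`t`-turnpath in `R_f` cannot use a turnvertex and its
reverse turnvertex. -/
theorem shortest_path_no_reverse_turn (n : ℕ) (hn : 1 ≤ n) (lam mu nu : ℕ → ℕ)
    (hpart : PartitionData n lam mu nu)
    (f : Flow) (hf : MemBZ n lam mu nu f)
    (p : List RVertex) (hp : IsSTPath (ResidAdj n lam mu nu f) p)
    (hmin : ∀ q : List RVertex, IsSTPath (ResidAdj n lam mu nu f) q → p.length ≤ q.length) :
    ∀ t : Turn, RVertex.turn t ∈ p → RVertex.turn ⟨t.tri, t.outE, t.inE⟩ ∉ p := by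
  classical
  intro t0 ht0 hrt0
  obtain ⟨hnd, hch, hhd, hlast⟩ := id hp
  have hplen : 0 < p.length := by
    cases p with
    | nil => simp at hhd
    | cons a l => simp
  have h0 : p[0] = RVertex.src := by
    rw [List.head?_eq_getElem?, List.getElem?_eq_getElem hplen] at hhd
    exact Option.some_injective _ hhd
  have hlastlt : p.length - 1 < p.length := by omega
  have hL : p[p.length - 1] = RVertex.tgt := by
    rw [List.getLast?_eq_getElem?, List.getElem?_eq_getElem hlastlt] at hlast
    exact Option.some_injective _ hlast
  have huniq : ∀ k l, (hk : k < p.length) → (hl : l < p.length) →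
      p[k] = p[l] → k = l := by
    intro k l hk hl hkl
    exact (List.Nodup.getElem_inj_iff hnd).mp hkl
  have hstep : ∀ k l, (hk : k < p.length) → (hl : l < p.length) → k + 1 = l →
      ResidAdj n lam mu nu f (p[k]'hk) (p[l]'hl) := by
    intro k l hk hl hkl
    subst hkl
    have := List.isChain_iff_getElem.mp hch k (by omega)
    simpa [List.get_eq_getElem] using this
  have target_facts : ∀ (u : RVertex) (t : Turn),
      ResidAdj n lam mu nu f u (.turn t) → t.valid n ∧ ¬ DelTurn n f t := by
    intro u t h
    cases u with
    | turn u' => exact ⟨h.1.2.1, h.2.2.1⟩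
    | src => exact ⟨h.1.1, h.2.1⟩
    | tgt => exact ⟨h.1.1, h.2.1⟩
  have key : ∀ g i j, i < j → ∀ (hi : i < p.length) (hj : j < p.length) (t : Turn),
      p[i]'hi = .turn t → p[j]'hj = .turn ⟨t.tri, t.outE, t.inE⟩ →
      p.length ≤ j - i + g → False := by
    intro g
    induction g with
    | zero => intro i j hij hi hj t _ _ hg; omega
    | succ g ih =>
      intro i j hij hi hj t hti htj hg
      have hi0 : i ≠ 0 := by
        intro h; subst h; rw [h0] at hti; exact RVertex.noConfusion hti
      have h1i : 1 ≤ i := Nat.one_le_iff_ne_zero.mpr hi0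
      have hjL : j ≠ p.length - 1 := by
        intro h; subst h; exact RVertex.noConfusion (hL.symm.trans htj)
      have hj2 : j + 1 < p.length := by omega
      have hedge_u := hstep (i-1) i (by omega) (by omega) (by omega)
      have hedge_jw := hstep j (j+1) (by omega) hj2 rfl
      -- `t` and its reverse are never adjacent in `R`
      have hij2 : i + 2 ≤ j := by
        by_contra hcon
        have hji : j = i + 1 := by omega
        subst hji
        have e := hstep i (i+1) (by omega) hj rfl
        rw [hti, htj] at e
        exact e.1.2.2.2.1 rfl
      have hvt : t.valid n ∧ ¬ DelTurn n f t := by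
        apply target_facts (p[i-1]'(by omega)) t
        have e := hedge_u; rw [hti] at e; exact e
      have hside_t : sideOf t.inE t.tri := hvt.1.2.1
      have hside_tout : sideOf t.outE t.tri := hvt.1.2.2.1
      have hio_t : t.inE ≠ t.outE := hvt.1.2.2.2
      cases hu : p[i-1]'(by omega) with
      | tgt =>
        have := huniq (i-1) (p.length - 1) (by omega) hlastlt (by rw [hu, hL])
        omega
      | src =>
        have hi1 : i = 1 := by
          have := huniq (i-1) 0 (by omega) hplen (by rw [hu, h0])
          omega
        have e1 := hedge_u; rw [hu, hti] at e1
        cases hw : p[j+1] with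
        | src =>
          have := huniq (j+1) 0 hj2 hplen (by rw [hw, h0])
          omega
        | tgt =>
          have e2 := hedge_jw; rw [htj, hw] at e2
          rcases e1.1.2 with ⟨m, -, hm⟩ | ⟨m, -, hm⟩ <;>
          · obtain ⟨m', -, hm'⟩ := e2.1.2
            rw [hm] at hm'
            exact EdgeK.noConfusion hm'
        | turn w' =>
          have e2 := hedge_jw; rw [htj, hw] at e2
          have hw'valid : w'.valid n := e2.1.2.1
          have hw'nodel : ¬ DelTurn n f w' := e2.2.2.1
          have hin_w : w'.inE = t.inE := (e2.1.2.2.1).symm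
          have hedgeq : ResidAdj n lam mu nu f .src (.turn w') := by
            refine ⟨⟨hw'valid, ?_⟩, hw'nodel, ?_⟩
            · rw [hin_w]; exact e1.1.2
            · rw [hin_w]; exact e1.2.2
          obtain ⟨q, hq, hqlen⟩ := splice _ p hp 0 (j+1) hplen hj2 (by omega) [] (by simp)
            (by simp)
            (by
              simp only [List.nil_append]
              refine List.isChain_pair.mpr ?_
              rw [h0, hw]; exact hedgeq)
          have := hmin q hq
          simp only [List.length_nil] at hqlen
          omega
      | turn u' =>
        have e1 := hedge_u; rw [hu, hti] at e1
        have hu'valid : u'.valid n := e1.1.1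
        have hu'nodel : ¬ DelTurn n f u' := e1.2.1
        have hTEu : TurnEdge u' t := e1.1.2.2
        have hnDelTEut : ¬ DelTurnEdge n f u' t := e1.2.2.2
        have hout_u : u'.outE = t.inE := hTEu.1
        have htriu : u'.tri ≠ t.tri := hTEu.2.1
        have sd : sideOf u'.inE u'.tri := hu'valid.2.1
        have sαu : sideOf t.inE u'.tri := hout_u ▸ hu'valid.2.2.1
        have hdα : u'.inE ≠ t.inE := by rw [← hout_u]; exact hu'valid.2.2.2
        have hi2 : 2 ≤ i := by
          rcases Nat.lt_or_ge i 2 with h | h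
          · exfalso
            simp only [show i - 1 = 0 from by omega] at hu
            rw [h0] at hu
            exact RVertex.noConfusion hu
          · exact h
        cases hw : p[j+1] with
        | src =>
          have := huniq (j+1) 0 hj2 hplen (by rw [hw, h0])
          omega
        | tgt =>
          have e2 := hedge_jw; rw [htj, hw] at e2
          have hedgeq : ResidAdj n lam mu nu f (.turn u') .tgt := by
            refine ⟨⟨hu'valid, ?_⟩, hu'nodel, ?_⟩
            · rw [hout_u]; exact e2.1.2
            · rw [hout_u]; exact e2.2.2
          obtain ⟨q, hq, hqlen⟩ := splice _ p hp (i-1) (j+1) (by omega) hj2 (by omega) []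
            (by simp) (by simp)
            (by
              simp only [List.nil_append]
              refine List.isChain_pair.mpr ?_
              rw [hu, hw]; exact hedgeq)
          have := hmin q hq
          simp only [List.length_nil] at hqlen
          omega
        | turn w' =>
          have e2 := hedge_jw; rw [htj, hw] at e2
          have hw'valid : w'.valid n := e2.1.2.1
          have hw'nodel : ¬ DelTurn n f w' := e2.2.2.1
          have hTEw : TurnEdge ⟨t.tri, t.outE, t.inE⟩ w' := e2.1.2.2
          have hnDelTEtw : ¬ DelTurnEdge n f ⟨t.tri, t.outE, t.inE⟩ w' := e2.2.2.2
          have hin_w : w'.inE = t.inE := hTEw.1.symm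
          have htriw : t.tri ≠ w'.tri := hTEw.2.1
          have sg : sideOf w'.outE w'.tri := hw'valid.2.2.1
          have sαw : sideOf t.inE w'.tri := hin_w ▸ hw'valid.2.1
          have hgα : w'.outE ≠ t.inE := by rw [← hin_w]; exact (Ne.symm hw'valid.2.2.2)
          by_cases htri : u'.tri = w'.tri
          · by_cases hio : u'.inE = w'.outE
            · -- the reverse pair moves outward: use the induction hypothesis
              have hw'eq : w' = ⟨u'.tri, u'.outE, u'.inE⟩ :=
                turn_ext htri.symm (by rw [hin_w, ← hout_u]) hio.symm
              have hm1 : i - 1 < j + 1 := by omega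
              have hm2 : i - 1 < p.length := by omega
              have hm3 : p.length ≤ (j+1) - (i-1) + g := by omega
              exact ih (i-1) (j+1) hm1 hm2 hj2 u' hu (by rw [hw, hw'eq]) hm3
            · -- the single-turn replacement
              have sgT : sideOf w'.outE u'.tri := htri ▸ sg
              have hqvalid : Turn.valid n ⟨u'.tri, u'.inE, w'.outE⟩ :=
                ⟨hu'valid.1, sd, sgT, hio⟩
              have hj3 : j + 2 < p.length := by
                have : j + 1 ≠ p.length - 1 := by
                  intro h
                  have : p[j+1]'hj2 = RVertex.tgt := by
                    simp only [h] at hw ⊢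
                    exact hL
                  exact RVertex.noConfusion (this.symm.trans hw)
                omega
              have hedge_u0 := hstep (i-2) (i-1) (by omega) (by omega) (by omega)
              have hedge_w1 := hstep (j+1) (j+2) (by omega) hj3 rfl
              rw [hu] at hedge_u0
              rw [hw] at hedge_w1
              -- the central flat-rhombus contradiction
              have hkey : ∀ ρ : Rhombus, ρ.valid n → slack f ρ = 0 → ρ.diag = t.inE →
                  u'.inE = cwNext u'.tri t.inE → False := by
                intro ρ hρv hρf hδ hd
                have hTud : u'.tri = ρ.triU ∨ u'.tri = ρ.triD := by
                  rcases eq_upOf_or_dnOf sαu with h | h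
                  · left; rw [h, ← hδ, rhombus_up]
                  · right
                    have h2 := rhombus_dn ρ; rw [hδ] at h2
                    exact Option.some_injective _ (h.symm.trans h2)
                have hBud : t.tri = ρ.triU ∨ t.tri = ρ.triD := by
                  rcases eq_upOf_or_dnOf hside_t with h | h
                  · left; rw [h, ← hδ, rhombus_up]
                  · right
                    have h2 := rhombus_dn ρ; rw [hδ] at h2
                    exact Option.some_injective _ (h.symm.trans h2)
                have hgval : w'.outE = cwNext u'.tri (cwNext u'.tri t.inE) :=
                  eq_cw2_of_ne sαu sgT hgα (Ne.symm hio) hd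
                rcases hTud with hT | hT
                · have hB : t.tri = ρ.triD := by
                    rcases hBud with h | h
                    · exact absurd (h.trans hT.symm).symm htriu
                    · exact h
                  rcases side_trichotomy hside_t hside_tout with h | h | h
                  · exact hio_t h.symm
                  · -- (rev t, w') is a deleted double contribution
                    apply hnDelTEtw
                    refine ⟨ρ, hρv, hρf, 3, ?_⟩
                    rw [negContrib_3]
                    congr 1
                    · refine (turn_ext (t := ⟨t.tri, t.outE, t.inE⟩) hB ?_ ?_).symm
                      · rw [h, hB, hδ]
                      · rw [hδ]
                    · refine (turn_ext ?_ ?_ ?_).symm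
                      · exact (hT.symm.trans htri).symm
                      · rw [hin_w, hδ]
                      · rw [hgval, hT, hδ]
                  · -- (u', t) is a deleted double contribution
                    apply hnDelTEut
                    refine ⟨ρ, hρv, hρf, 2, ?_⟩
                    rw [negContrib_2]
                    congr 1
                    · refine (turn_ext hT ?_ ?_).symm
                      · rw [hd, hT, hδ]
                      · rw [hout_u, hδ]
                    · refine (turn_ext hB ?_ ?_).symm
                      · rw [hδ]
                      · rw [h, hB, hδ]
                · have hB : t.tri = ρ.triU := by
                    rcases hBud with h | h
                    · exact h
                    · exact absurd (h.trans hT.symm).symm htriu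
                  rcases side_trichotomy hside_t hside_tout with h | h | h
                  · exact hio_t h.symm
                  · apply hnDelTEtw
                    refine ⟨ρ, hρv, hρf, 2, ?_⟩
                    rw [negContrib_2]
                    congr 1
                    · refine (turn_ext (t := ⟨t.tri, t.outE, t.inE⟩) hB ?_ ?_).symm
                      · rw [h, hB, hδ]
                      · rw [hδ]
                    · refine (turn_ext ?_ ?_ ?_).symm
                      · exact (hT.symm.trans htri).symm
                      · rw [hin_w, hδ]
                      · rw [hgval, hT, hδ]
                  · apply hnDelTEut
                    refine ⟨ρ, hρv, hρf, 3, ?_⟩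
                    rw [negContrib_3]
                    congr 1
                    · refine (turn_ext hT ?_ ?_).symm
                      · rw [hd, hT, hδ]
                      · rw [hout_u, hδ]
                    · refine (turn_ext hB ?_ ?_).symm
                      · rw [hδ]
                      · rw [h, hB, hδ]
              -- the replacement turn is not deleted
              have hqnodel : ¬ DelTurn n f ⟨u'.tri, u'.inE, w'.outE⟩ := by
                rintro ⟨ρ, hρv, hρf, jj, hjj⟩
                rcases negContrib_cases ρ jj _ hjj with h | h | h | h
                · have h' : (⟨u'.tri, u'.inE, w'.outE⟩ : Turn) =
                      ⟨ρ.triU, cwNext ρ.triU ρ.diag, cwNext ρ.triU (cwNext ρ.triU ρ.diag)⟩ :=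
                    Contrib.single.inj h
                  have h1 : u'.tri = ρ.triU := congrArg Turn.tri h'
                  have h2 : u'.inE = cwNext ρ.triU ρ.diag := congrArg Turn.inE h'
                  have h3 : w'.outE = cwNext ρ.triU (cwNext ρ.triU ρ.diag) :=
                    congrArg Turn.outE h'
                  rw [← h1] at h2 h3
                  have sδ : sideOf ρ.diag u'.tri := by rw [h1]; exact rhombus_side_up ρ
                  have hδd : ρ.diag ≠ u'.inE := fun hh => cwNext_ne sδ (h2.symm.trans hh.symm)
                  have hδg : ρ.diag ≠ w'.outE := fun hh => cwNext2_ne sδ (h3.symm.trans hh.symm)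
                  have hδα : ρ.diag = t.inE :=
                    third_side_eq sd sαu sgT sδ (Ne.symm hdα) (Ne.symm hio) hgα hδd hδg
                  exact hkey ρ hρv hρf hδα (by rw [← hδα]; exact h2)
                · have h' : (⟨u'.tri, u'.inE, w'.outE⟩ : Turn) =
                      ⟨ρ.triD, cwNext ρ.triD ρ.diag, cwNext ρ.triD (cwNext ρ.triD ρ.diag)⟩ :=
                    Contrib.single.inj h
                  have h1 : u'.tri = ρ.triD := congrArg Turn.tri h'
                  have h2 : u'.inE = cwNext ρ.triD ρ.diag := congrArg Turn.inE h'
                  have h3 : w'.outE = cwNext ρ.triD (cwNext ρ.triD ρ.diag) :=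
                    congrArg Turn.outE h'
                  rw [← h1] at h2 h3
                  have sδ : sideOf ρ.diag u'.tri := by rw [h1]; exact rhombus_side_dn ρ
                  have hδd : ρ.diag ≠ u'.inE := fun hh => cwNext_ne sδ (h2.symm.trans hh.symm)
                  have hδg : ρ.diag ≠ w'.outE := fun hh => cwNext2_ne sδ (h3.symm.trans hh.symm)
                  have hδα : ρ.diag = t.inE :=
                    third_side_eq sd sαu sgT sδ (Ne.symm hdα) (Ne.symm hio) hgα hδd hδg
                  exact hkey ρ hρv hρf hδα (by rw [← hδα]; exact h2)
                · exact Contrib.noConfusion h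
                · exact Contrib.noConfusion h
              have hi2lt : i - 2 < p.length := by omega
              have hedge_q1 : ResidAdj n lam mu nu f (p[i-2]'hi2lt)
                  (.turn ⟨u'.tri, u'.inE, w'.outE⟩) := by
                cases hu0 : p[i-2]'hi2lt with
                | tgt =>
                  exfalso
                  have := huniq (i-2) (p.length - 1) hi2lt hlastlt (by rw [hu0, hL])
                  omega
                | src =>
                  rw [hu0] at hedge_u0
                  exact ⟨⟨hqvalid, hedge_u0.1.2⟩, hqnodel, hedge_u0.2.2⟩
                | turn u0 =>
                  rw [hu0] at hedge_u0
                  have hTE0 : TurnEdge u0 u' := hedge_u0.1.2.2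
                  have hu0valid : u0.valid n := hedge_u0.1.1
                  refine ⟨⟨hu0valid, hqvalid, hTE0.1, hTE0.2.1, ?_⟩, hedge_u0.2.1, hqnodel, ?_⟩
                  · intro hh
                    have s1 : sideOf u'.inE u0.tri := hTE0.1 ▸ hu0valid.2.2.1
                    have s2 : sideOf w'.outE u0.tri := hh ▸ hu0valid.2.1
                    exact hio (eq_of_two_shared hTE0.2.1 s1 sd s2 sgT)
                  · rintro ⟨ρ, hρv, hρf, jj, hjj⟩
                    rcases negContrib_cases ρ jj _ hjj with h | h | h | h
                    · exact Contrib.noConfusion h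
                    · exact Contrib.noConfusion h
                    · obtain ⟨hA, hB2⟩ := Contrib.double.inj h
                      have k1 : u'.tri = ρ.triD := congrArg Turn.tri hB2
                      have k2 : u'.inE = ρ.diag := congrArg Turn.inE hB2
                      have k3 : w'.outE = cwNext ρ.triD (cwNext ρ.triD ρ.diag) :=
                        congrArg Turn.outE hB2
                      rw [← k1, ← k2] at k3
                      have hα : t.inE = cwNext u'.tri u'.inE :=
                        eq_cw_of_ne sd sαu (Ne.symm hdα) (Ne.symm hgα) k3
                      apply hw'nodel
                      refine ⟨ρ, hρv, hρf, 1, ?_⟩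
                      rw [negContrib_1]
                      congr 1
                      refine (turn_ext ?_ ?_ ?_).symm
                      · exact htri.symm.trans k1
                      · rw [hin_w, hα, k1, k2]
                      · exact congrArg Turn.outE hB2
                    · obtain ⟨hA, hB2⟩ := Contrib.double.inj h
                      have k1 : u'.tri = ρ.triU := congrArg Turn.tri hB2
                      have k2 : u'.inE = ρ.diag := congrArg Turn.inE hB2
                      have k3 : w'.outE = cwNext ρ.triU (cwNext ρ.triU ρ.diag) :=
                        congrArg Turn.outE hB2
                      rw [← k1, ← k2] at k3
                      have hα : t.inE = cwNext u'.tri u'.inE :=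
                        eq_cw_of_ne sd sαu (Ne.symm hdα) (Ne.symm hgα) k3
                      apply hw'nodel
                      refine ⟨ρ, hρv, hρf, 0, ?_⟩
                      rw [negContrib_0]
                      congr 1
                      refine (turn_ext ?_ ?_ ?_).symm
                      · exact htri.symm.trans k1
                      · rw [hin_w, hα, k1, k2]
                      · exact congrArg Turn.outE hB2
              have hedge_q2 : ResidAdj n lam mu nu f (.turn ⟨u'.tri, u'.inE, w'.outE⟩)
                  (p[j+2]'hj3) := by
                cases hw1 : p[j+2]'hj3 with
                | src =>
                  exfalso
                  have := huniq (j+2) 0 hj3 hplen (by rw [hw1, h0])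
                  omega
                | tgt =>
                  rw [hw1] at hedge_w1
                  exact ⟨⟨hqvalid, hedge_w1.1.2⟩, hqnodel, hedge_w1.2.2⟩
                | turn w1 =>
                  rw [hw1] at hedge_w1
                  have hTE1 : TurnEdge w' w1 := hedge_w1.1.2.2
                  have hw1valid : w1.valid n := hedge_w1.1.2.1
                  have hnew1 : u'.tri ≠ w1.tri := fun hh => hTE1.2.1 (htri.symm.trans hh)
                  refine ⟨⟨hqvalid, hw1valid, hTE1.1, hnew1, ?_⟩, hqnodel,
                    hedge_w1.2.2.1, ?_⟩
                  · intro hh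
                    have s1 : sideOf w'.outE w1.tri := hTE1.1 ▸ hw1valid.2.1
                    have s2 : sideOf u'.inE w1.tri := hh ▸ hw1valid.2.2.1
                    exact hio (eq_of_two_shared hnew1 sd s2 sgT s1)
                  · rintro ⟨ρ, hρv, hρf, jj, hjj⟩
                    rcases negContrib_cases ρ jj _ hjj with h | h | h | h
                    · exact Contrib.noConfusion h
                    · exact Contrib.noConfusion h
                    · obtain ⟨hA, hB2⟩ := Contrib.double.inj h
                      have k1 : u'.tri = ρ.triU := congrArg Turn.tri hA
                      have k2 : u'.inE = cwNext ρ.triU ρ.diag := congrArg Turn.inE hA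
                      have k3 : w'.outE = ρ.diag := congrArg Turn.outE hA
                      rw [← k1, ← k3] at k2
                      have hα : t.inE = cwNext u'.tri (cwNext u'.tri w'.outE) :=
                        eq_cw2_of_ne sgT sαu (Ne.symm hgα) (Ne.symm hdα) k2
                      apply hu'nodel
                      refine ⟨ρ, hρv, hρf, 0, ?_⟩
                      rw [negContrib_0]
                      congr 1
                      refine (turn_ext ?_ ?_ ?_).symm
                      · exact k1
                      · exact congrArg Turn.inE hA
                      · rw [hout_u, hα, k1, k3]
                    · obtain ⟨hA, hB2⟩ := Contrib.double.inj h
                      have k1 : u'.tri = ρ.triD := congrArg Turn.tri hA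
                      have k2 : u'.inE = cwNext ρ.triD ρ.diag := congrArg Turn.inE hA
                      have k3 : w'.outE = ρ.diag := congrArg Turn.outE hA
                      rw [← k1, ← k3] at k2
                      have hα : t.inE = cwNext u'.tri (cwNext u'.tri w'.outE) :=
                        eq_cw2_of_ne sgT sαu (Ne.symm hgα) (Ne.symm hdα) k2
                      apply hu'nodel
                      refine ⟨ρ, hρv, hρf, 1, ?_⟩
                      rw [negContrib_1]
                      congr 1
                      refine (turn_ext ?_ ?_ ?_).symm
                      · exact k1
                      · exact congrArg Turn.inE hA
                      · rw [hout_u, hα, k1, k3]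
              by_cases hqin : RVertex.turn ⟨u'.tri, u'.inE, w'.outE⟩ ∈ p
              · obtain ⟨z, hzlt, hpz⟩ := List.mem_iff_getElem.mp hqin
                have hz1 : z ≠ i - 1 := by
                  intro hh; subst hh
                  have heq : u' = ⟨u'.tri, u'.inE, w'.outE⟩ :=
                    RVertex.turn.inj (hu.symm.trans hpz)
                  exact hgα ((congrArg Turn.outE heq).symm.trans hout_u)
                rcases Nat.lt_or_ge z i with hzi | hzi
                · have hzi2 : z ≤ i - 2 := by omega
                  obtain ⟨q, hq, hqlen⟩ := splice _ p hp z (j+2) hzlt hj3 (by omega) []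
                    (by simp) (by simp)
                    (by
                      simp only [List.nil_append]
                      refine List.isChain_pair.mpr ?_
                      rw [hpz]
                      exact hedge_q2)
                  have := hmin q hq
                  simp only [List.length_nil] at hqlen
                  omega
                · obtain ⟨q, hq, hqlen⟩ := splice _ p hp (i-2) z hi2lt hzlt (by omega) []
                    (by simp) (by simp)
                    (by
                      simp only [List.nil_append]
                      refine List.isChain_pair.mpr ?_
                      rw [hpz]
                      exact hedge_q1)
                  have := hmin q hq
                  simp only [List.length_nil] at hqlen
                  omega
              · obtain ⟨q, hq, hqlen⟩ := splice _ p hp (i-2) (j+2) hi2lt hj3 (by omega)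
                  [.turn ⟨u'.tri, u'.inE, w'.outE⟩] (by simp) (by simpa using hqin)
                  (by
                    refine List.isChain_cons.mpr ⟨?_, ?_⟩
                    · intro y hy
                      simp at hy
                      subst hy
                      exact hedge_q1
                    · simp only [List.cons_append, List.nil_append]
                      exact List.isChain_pair.mpr hedge_q2)
                have := hmin q hq
                simp only [List.length_singleton] at hqlen
                omega
          · -- distinct triangles: direct shortcut
            have hne_io : u'.inE ≠ w'.outE := by
              intro hEq
              exact hdα (eq_of_two_shared htri sαu sαw sd (hEq ▸ sg)).symm
            have hnDTE : ¬ DelTurnEdge n f u' w' := by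
              rintro ⟨ρ, hρv, hρf, jj, hjj⟩
              rcases negContrib_cases ρ jj _ hjj with h | h | h | h
              · exact Contrib.noConfusion h
              · exact Contrib.noConfusion h
              · obtain ⟨h1, h2⟩ := Contrib.double.inj h.symm
                have e_u_tri : u'.tri = ρ.triU := by rw [← h1]
                have e_w_tri : w'.tri = ρ.triD := by rw [← h2]
                have e_u_out : u'.outE = ρ.diag := by rw [← h1]
                have hdiag : ρ.diag = t.inE := by rw [← e_u_out, hout_u]
                have hBud : t.tri = ρ.triU ∨ t.tri = ρ.triD := by
                  rcases eq_upOf_or_dnOf hside_t with h' | h'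
                  · left; rw [h', ← hdiag, rhombus_up]
                  · right
                    have h2' := rhombus_dn ρ; rw [hdiag] at h2'
                    exact Option.some_injective _ (h'.symm.trans h2')
                rcases hBud with h' | h'
                · exact htriu (h'.trans e_u_tri.symm).symm
                · exact htriw (h'.trans e_w_tri.symm)
              · obtain ⟨h1, h2⟩ := Contrib.double.inj h.symm
                have e_u_tri : u'.tri = ρ.triD := by rw [← h1]
                have e_w_tri : w'.tri = ρ.triU := by rw [← h2]
                have e_u_out : u'.outE = ρ.diag := by rw [← h1]
                have hdiag : ρ.diag = t.inE := by rw [← e_u_out, hout_u]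
                have hBud : t.tri = ρ.triU ∨ t.tri = ρ.triD := by
                  rcases eq_upOf_or_dnOf hside_t with h' | h'
                  · left; rw [h', ← hdiag, rhombus_up]
                  · right
                    have h2' := rhombus_dn ρ; rw [hdiag] at h2'
                    exact Option.some_injective _ (h'.symm.trans h2')
                rcases hBud with h' | h'
                · exact htriw (h'.trans e_w_tri.symm)
                · exact htriu (h'.trans e_u_tri.symm).symm
            have hedgeq : ResidAdj n lam mu nu f (.turn u') (.turn w') :=
              ⟨⟨hu'valid, hw'valid, hout_u.trans hin_w.symm, htri, hne_io⟩,
                hu'nodel, hw'nodel, hnDTE⟩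
            obtain ⟨q, hq, hqlen⟩ := splice _ p hp (i-1) (j+1) (by omega) hj2 (by omega) []
              (by simp) (by simp)
              (by
                simp only [List.nil_append]
                refine List.isChain_pair.mpr ?_
                rw [hu, hw]; exact hedgeq)
            have := hmin q hq
            simp only [List.length_nil] at hqlen
            omega
  obtain ⟨a, ha, hpa⟩ := List.mem_iff_getElem.mp ht0
  obtain ⟨b, hb, hpb⟩ := List.mem_iff_getElem.mp hrt0
  have hab : a ≠ b := by
    intro h
    subst h
    rw [hpa] at hpb
    have h1 : t0 = ⟨t0.tri, t0.outE, t0.inE⟩ := RVertex.turn.inj hpb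
    have h2 : t0.inE = t0.outE := congrArg Turn.inE h1
    have ha0 : a ≠ 0 := by
      intro h; subst h; rw [h0] at hpa; exact RVertex.noConfusion hpa
    have e := hstep (a-1) a (by omega) ha (by omega)
    rw [hpa] at e
    exact (target_facts _ t0 e).1.2.2.2 h2
  rcases Nat.lt_or_ge a b with h | h
  · exact key p.length a b h ha hb t0 hpa hpb (by omega)
  · exact key p.length b a (by omega) hb ha ⟨t0.tri, t0.outE, t0.inE⟩ hpb hpa (by omega)
end LRFlows
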